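/- Let R and B be finite sets of points in ℝ² with B nonempty and |B ∪ R| ≥ 3, in general position. Then there exists a strip W with boundary lines ℓ₁ and ℓ₂ such that ℓ₁ contains at least two points of B ∪ R, ℓ₂ contains at least one point of B ∪ R, and |E(W)| ≤ |E(W')| for every strip W'. -/

import Mathlib

open Classical

noncomputable section

/-- Points in the plane. -/
abbrev Pt : Type := EuclideanSpace ℝ (Fin 2)

/-- The strip `{x : c₁ ≤ ⟪v, x⟫ ≤ c₂}`. -/
def strip (v : Pt) (c₁ c₂ : ℝ) : Set Pt :=
  {x | c₁ ≤ (inner ℝ v x : ℝ) ∧ (inner ℝ v x : ℝ) ≤ c₂}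

/-- The misclassified points: red points in the interior of `W` together with
blue points outside the closure of `W`. -/
def errSet (R B : Finset Pt) (W : Set Pt) : Finset Pt :=
  (R.filter fun p => p ∈ interior W) ∪ (B.filter fun p => p ∉ closure W)

/-- General position: no three points collinear, and pairwise distinct
`x`-coordinates. -/
def GenPos (P : Finset Pt) : Prop :=
  (∀ p ∈ P, ∀ q ∈ P, ∀ r ∈ P, p ≠ q → p ≠ r → q ≠ r →
      ¬ Collinear ℝ ({p, q, r} : Set Pt)) ∧
  (∀ p ∈ P, ∀ q ∈ P, p ≠ q → p 0 ≠ q 0)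

open RealInnerProductSpace

lemma inner_two (v x : Pt) : ⟪v, x⟫ = v 0 * x 0 + v 1 * x 1 := by
  simp [PiLp.inner_apply, Fin.sum_univ_two, RCLike.inner_apply, mul_comm]

def rot (u : Pt) : Pt := (WithLp.equiv 2 (Fin 2 → ℝ)).symm ![-(u 1), u 0]

lemma rot0 (u : Pt) : rot u 0 = -(u 1) := rfl

lemma rot1 (u : Pt) : rot u 1 = u 0 := rfl

lemma pt_ext_iff (u : Pt) : u = 0 ↔ u 0 = 0 ∧ u 1 = 0 := by
  constructor
  · rintro rfl; simp
  · rintro ⟨h0, h1⟩; ext i; fin_cases i <;> simpa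

lemma rot_ne_zero {u : Pt} (hu : u ≠ 0) : rot u ≠ 0 := by
  intro h
  rw [pt_ext_iff] at h
  have h0 : -(u 1) = 0 := h.1
  have h1 : u 0 = 0 := h.2
  exact hu (by rw [pt_ext_iff]; exact ⟨h1, by simpa using h0⟩)

lemma inner_rot_self (u : Pt) : ⟪u, rot u⟫ = 0 := by
  rw [inner_two, rot0, rot1]; ring

lemma cont_inner (v : Pt) : Continuous fun x : Pt => (inner ℝ v x : ℝ) :=
  Continuous.inner continuous_const continuous_id

lemma strip_closed (v : Pt) (c₁ c₂ : ℝ) : IsClosed (strip v c₁ c₂) :=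
  IsClosed.inter (isClosed_le continuous_const (cont_inner v))
    (isClosed_le (cont_inner v) continuous_const)

lemma mem_interior_strip {v : Pt} (hv : v ≠ 0) (c₁ c₂ : ℝ) (x : Pt) :
    x ∈ interior (strip v c₁ c₂) ↔ c₁ < ⟪v, x⟫ ∧ ⟪v, x⟫ < c₂ := by
  constructor
  · intro hx
    obtain ⟨ε, hε, hball⟩ := Metric.isOpen_iff.1 isOpen_interior x hx
    have hball' : Metric.ball x ε ⊆ strip v c₁ c₂ :=
      hball.trans interior_subset
    have hvn : 0 < ‖v‖ := norm_pos_iff.2 hv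
    have key : ∀ t : ℝ, |t| * ‖v‖ < ε → c₁ ≤ ⟪v, x⟫ + t * ‖v‖^2 ∧ ⟪v, x⟫ + t * ‖v‖^2 ≤ c₂ := by
      intro t ht
      have hmem : x + t • v ∈ Metric.ball x ε := by
        rw [Metric.mem_ball, dist_eq_norm]
        simpa [norm_smul, abs_mul] using (by simpa using ht)
      have hcomp : (inner ℝ v (x + t • v) : ℝ) = ⟪v, x⟫ + t * ‖v‖^2 := by
        rw [inner_add_right, real_inner_smul_right, real_inner_self_eq_norm_sq]
      have := hball' hmem
      rw [strip, Set.mem_setOf_eq, hcomp] at this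
      exact this
    set t₀ : ℝ := ε / (2 * ‖v‖) with ht₀
    have ht₀pos : 0 < t₀ := by positivity
    have habs : |t₀| * ‖v‖ < ε := by
      rw [abs_of_pos ht₀pos, ht₀]
      rw [div_mul_eq_mul_div, div_lt_iff₀ (by positivity)]
      nlinarith
    have habs' : |(-t₀)| * ‖v‖ < ε := by simpa using habs
    have h1 := (key (-t₀) habs').1
    have h2 := (key t₀ habs).2
    constructor
    · nlinarith [sq_nonneg ‖v‖, mul_pos ht₀pos (mul_pos hvn hvn)]
    · nlinarith [mul_pos ht₀pos (mul_pos hvn hvn)]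
  · intro hx
    have hopen : IsOpen {y : Pt | c₁ < ⟪v, y⟫ ∧ ⟪v, y⟫ < c₂} :=
      IsOpen.inter (isOpen_lt continuous_const (cont_inner v))
        (isOpen_lt (cont_inner v) continuous_const)
    have hsub : {y : Pt | c₁ < ⟪v, y⟫ ∧ ⟪v, y⟫ < c₂} ⊆ strip v c₁ c₂ := by
      intro y hy; exact ⟨hy.1.le, hy.2.le⟩
    exact interior_maximal hsub hopen hx

def nerr (R B : Finset Pt) (v : Pt) (c₁ c₂ : ℝ) : ℕ :=
  ((R.filter fun s => c₁ < ⟪v, s⟫ ∧ ⟪v, s⟫ < c₂) ∪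
   (B.filter fun s => ⟪v, s⟫ < c₁ ∨ c₂ < ⟪v, s⟫)).card

lemma errSet_card (R B : Finset Pt) {v : Pt} (hv : v ≠ 0) (c₁ c₂ : ℝ) :
    (errSet R B (strip v c₁ c₂)).card = nerr R B v c₁ c₂ := by
  have hcl : closure (strip v c₁ c₂) = strip v c₁ c₂ := (strip_closed v c₁ c₂).closure_eq
  unfold errSet nerr
  congr 1
  ext x
  simp only [Finset.mem_union, Finset.mem_filter, mem_interior_strip hv, hcl]
  simp only [strip, Set.mem_setOf_eq, not_and_or, not_le]

lemma nerr_flip (R B : Finset Pt) (v : Pt) (c₁ c₂ : ℝ) :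
    nerr R B (-v) (-c₂) (-c₁) = nerr R B v c₁ c₂ := by
  unfold nerr
  congr 1
  ext x
  simp only [Finset.mem_union, Finset.mem_filter, inner_neg_left]
  constructor
  · rintro (⟨hx, h1, h2⟩ | ⟨hx, h | h⟩)
    · exact Or.inl ⟨hx, by linarith, by linarith⟩
    · exact Or.inr ⟨hx, Or.inr (by linarith)⟩
    · exact Or.inr ⟨hx, Or.inl (by linarith)⟩
  · rintro (⟨hx, h1, h2⟩ | ⟨hx, h | h⟩)
    · exact Or.inl ⟨hx, by linarith, by linarith⟩
    · exact Or.inr ⟨hx, Or.inr (by linarith)⟩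
    · exact Or.inr ⟨hx, Or.inl (by linarith)⟩

lemma signPos {α β t : ℝ} (hα : α ≠ 0) (h : β ≠ 0 → |t| * |β| ≤ |α|) (hpos : 0 < α + t * β) :
    0 < α := by
  rcases eq_or_ne β 0 with hb | hb
  · simpa [hb] using hpos
  · by_contra hle
    push_neg at hle
    have hαneg : α < 0 := lt_of_le_of_ne hle hα
    have h1 : t * β ≤ |t| * |β| := by
      calc t * β ≤ |t * β| := le_abs_self _
        _ = |t| * |β| := abs_mul t β
    have h2 : |α| = -α := abs_of_neg hαneg
    have := h hb
    linarith

lemma signNeg {α β t : ℝ} (hα : α ≠ 0) (h : β ≠ 0 → |t| * |β| ≤ |α|) (hneg : α + t * β < 0) :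
    α < 0 := by
  have := signPos (α := -α) (β := -β) (t := t) (neg_ne_zero.2 hα)
    (fun hb => by simpa using h (by simpa using hb)) (by linarith)
  linarith

lemma dep_of_perp {w x y : Pt} (hw : w ≠ 0) (hx : ⟪w, x⟫ = 0) (hy : ⟪w, y⟫ = 0)
    (hx0 : x ≠ 0) : ∃ c : ℝ, y = c • x := by
  rw [inner_two] at hx hy
  have hcross : x 0 * y 1 - x 1 * y 0 = 0 := by
    rcases (by
      by_contra h
      push_neg at h
      exact hw (pt_ext_iff w |>.2 ⟨h.1, h.2⟩) : w 0 ≠ 0 ∨ w 1 ≠ 0) with h | h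
    · have : w 0 * (x 0 * y 1 - x 1 * y 0) = 0 := by linear_combination y 1 * hx - x 1 * hy
      rcases mul_eq_zero.1 this with h' | h'
      · exact absurd h' h
      · exact h'
    · have : w 1 * (x 0 * y 1 - x 1 * y 0) = 0 := by linear_combination x 0 * hy - y 0 * hx
      rcases mul_eq_zero.1 this with h' | h'
      · exact absurd h' h
      · exact h'
  rcases (by
    by_contra h
    push_neg at h
    exact hx0 (pt_ext_iff x |>.2 ⟨h.1, h.2⟩) : x 0 ≠ 0 ∨ x 1 ≠ 0) with h | h
  · refine ⟨y 0 / x 0, ?_⟩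
    ext i
    fin_cases i
    · show y 0 = y 0 / x 0 * x 0
      field_simp
    · show y 1 = y 0 / x 0 * x 1
      field_simp
      linarith [hcross]
  · refine ⟨y 1 / x 1, ?_⟩
    ext i
    fin_cases i
    · show y 0 = y 1 / x 1 * x 0
      field_simp
      linarith [hcross]
    · show y 1 = y 1 / x 1 * x 1
      field_simp

lemma collinear_of_perp {w p a b : Pt} (hw : w ≠ 0) (ha : ⟪w, a⟫ = ⟪w, p⟫)
    (hb : ⟪w, b⟫ = ⟪w, p⟫) (hap : a ≠ p) : Collinear ℝ ({p, a, b} : Set Pt) := by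
  have hx : ⟪w, a - p⟫ = 0 := by rw [inner_sub_right, ha, sub_self]
  have hy : ⟪w, b - p⟫ = 0 := by rw [inner_sub_right, hb, sub_self]
  obtain ⟨c, hc⟩ := dep_of_perp hw hx hy (sub_ne_zero.2 hap)
  rw [collinear_iff_of_mem (Set.mem_insert p _)]
  refine ⟨a - p, ?_⟩
  rintro x (rfl | rfl | rfl)
  · exact ⟨0, by simp⟩
  · exact ⟨1, by simp⟩
  · exact ⟨c, by rw [← hc]; simp⟩

lemma snap (R B : Finset Pt) (hB : B.Nonempty) (v : Pt) {c₁ c₂ : ℝ} (hle : c₁ ≤ c₂) :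
    ∃ p ∈ B ∪ R, ∃ r ∈ B ∪ R, ⟪v, p⟫ ≤ ⟪v, r⟫ ∧
      nerr R B v ⟪v, p⟫ ⟪v, r⟫ ≤ nerr R B v c₁ c₂ := by
  set P := B ∪ R with hP
  by_cases hS : (P.filter fun s => c₁ ≤ ⟪v, s⟫ ∧ ⟪v, s⟫ ≤ c₂).Nonempty
  · obtain ⟨p, hpS, hpmin⟩ := Finset.exists_min_image _ (fun s => ⟪v, s⟫) hS
    obtain ⟨r, hrS, hrmax⟩ := Finset.exists_max_image _ (fun s => ⟪v, s⟫) hS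
    rw [Finset.mem_filter] at hpS hrS
    refine ⟨p, hpS.1, r, hrS.1, hrmax p (Finset.mem_filter.2 hpS), ?_⟩
    apply Finset.card_le_card
    intro s hs
    rw [Finset.mem_union, Finset.mem_filter, Finset.mem_filter] at hs ⊢
    rcases hs with ⟨hsR, h1, h2⟩ | ⟨hsB, h⟩
    · exact Or.inl ⟨hsR, lt_of_le_of_lt hpS.2.1 h1, lt_of_lt_of_le h2 hrS.2.2⟩
    · refine Or.inr ⟨hsB, ?_⟩
      have hsP : s ∈ P := Finset.mem_union_left _ hsB
      rcases h with h | h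
      · left
        by_contra hc
        push_neg at hc
        have hsS : s ∈ P.filter fun s => c₁ ≤ ⟪v, s⟫ ∧ ⟪v, s⟫ ≤ c₂ :=
          Finset.mem_filter.2 ⟨hsP, hc, le_trans h.le hpS.2.2⟩
        exact absurd (hpmin s hsS) (not_le.2 h)
      · right
        by_contra hc
        push_neg at hc
        have hsS : s ∈ P.filter fun s => c₁ ≤ ⟪v, s⟫ ∧ ⟪v, s⟫ ≤ c₂ :=
          Finset.mem_filter.2 ⟨hsP, le_trans hrS.2.1 h.le, hc⟩
        exact absurd (hrmax s hsS) (not_le.2 h)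
  · obtain ⟨b, hb⟩ := hB
    refine ⟨b, Finset.mem_union_left _ hb, b, Finset.mem_union_left _ hb, le_refl _, ?_⟩
    rw [Finset.not_nonempty_iff_eq_empty] at hS
    have horig : (R.filter fun s => c₁ < ⟪v, s⟫ ∧ ⟪v, s⟫ < c₂) ∪
        (B.filter fun s => ⟪v, s⟫ < c₁ ∨ c₂ < ⟪v, s⟫) = B := by
      have hout : ∀ s ∈ P, ⟪v, s⟫ < c₁ ∨ c₂ < ⟪v, s⟫ := by
        intro s hsP
        by_contra hc
        push_neg at hc
        have : s ∈ P.filter fun s => c₁ ≤ ⟪v, s⟫ ∧ ⟪v, s⟫ ≤ c₂ :=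
          Finset.mem_filter.2 ⟨hsP, hc.1, hc.2⟩
        rw [hS] at this
        exact absurd this (Finset.notMem_empty s)
      ext s
      rw [Finset.mem_union, Finset.mem_filter, Finset.mem_filter]
      constructor
      · rintro (⟨hsR, h1, h2⟩ | ⟨hsB, _⟩)
        · rcases hout s (Finset.mem_union_right _ hsR) with h | h <;> linarith
        · exact hsB
      · intro hsB
        exact Or.inr ⟨hsB, hout s (Finset.mem_union_left _ hsB)⟩
    rw [nerr, nerr, horig]
    have h1 : (R.filter fun s => ⟪v, b⟫ < ⟪v, s⟫ ∧ ⟪v, s⟫ < ⟪v, b⟫) = ∅ := by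
      apply Finset.filter_false_of_mem
      intro s _
      rintro ⟨h1, h2⟩
      linarith
    rw [h1, Finset.empty_union]
    exact Finset.card_le_card (Finset.filter_subset _ _)

def Good (P : Finset Pt) (v : Pt) (c₁ c₂ : ℝ) : Prop :=
  v ≠ 0 ∧ c₁ ≤ c₂ ∧
    (∃ p ∈ P, ∃ q ∈ P, p ≠ q ∧ ⟪v, p⟫ = c₁ ∧ ⟪v, q⟫ = c₁) ∧
    (∃ r ∈ P, ⟪v, r⟫ = c₂)

lemma rotmain (R B : Finset Pt) (hgen : GenPos (B ∪ R)) (hcard : 3 ≤ (B ∪ R).card)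
    {v : Pt} (hv : v ≠ 0) {p r : Pt} (hp : p ∈ B ∪ R) (hr : r ∈ B ∪ R)
    (hle : ⟪v, p⟫ ≤ ⟪v, r⟫) :
    ∃ v' c₁' c₂', Good (B ∪ R) v' c₁' c₂' ∧
      nerr R B v' c₁' c₂' ≤ nerr R B v ⟪v, p⟫ ⟪v, r⟫ := by
  set P := B ∪ R with hP
  by_cases hA : ∃ s ∈ P, (s ≠ p ∧ ⟪v, s⟫ = ⟪v, p⟫) ∨ (s ≠ r ∧ ⟪v, s⟫ = ⟪v, r⟫)
  · obtain ⟨s, hsP, hs⟩ := hA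
    rcases hs with ⟨hsp, hse⟩ | ⟨hsr, hse⟩
    · exact ⟨v, ⟪v, p⟫, ⟪v, r⟫, ⟨hv, hle, ⟨p, hp, s, hsP, Ne.symm hsp, rfl, hse⟩,
        ⟨r, hr, rfl⟩⟩, le_refl _⟩
    · refine ⟨-v, -⟪v, r⟫, -⟪v, p⟫, ⟨neg_ne_zero.2 hv, neg_le_neg hle,
        ⟨r, hr, s, hsP, Ne.symm hsr, by rw [inner_neg_left], by rw [inner_neg_left, hse]⟩,
        ⟨p, hp, by rw [inner_neg_left]⟩⟩, ?_⟩
      rw [nerr_flip]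
  -- main rotation case
  push_neg at hA
  have hA1 : ∀ s ∈ P, s ≠ p → ⟪v, s⟫ ≠ ⟪v, p⟫ := fun s hs hsp => ((hA s hs).1 hsp)
  have hA2 : ∀ s ∈ P, s ≠ r → ⟪v, s⟫ ≠ ⟪v, r⟫ := fun s hs hsr => ((hA s hs).2 hsr)
  set w := rot v with hwdef
  have hw : w ≠ 0 := rot_ne_zero hv
  have hvw : ⟪v, w⟫ = 0 := inner_rot_self v
  -- the event set
  set T : Finset ℝ :=
    ((P.filter fun s => ⟪w, s⟫ ≠ ⟪w, p⟫).image
        fun s => -(⟪v, s⟫ - ⟪v, p⟫) / (⟪w, s⟫ - ⟪w, p⟫)) ∪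
    ((P.filter fun s => ⟪w, s⟫ ≠ ⟪w, r⟫).image
        fun s => -(⟪v, s⟫ - ⟪v, r⟫) / (⟪w, s⟫ - ⟪w, r⟫)) with hT
  -- T is nonempty
  have hTne : T.Nonempty := by
    rcases eq_or_ne p r with rfl | hpr
    · -- need two other points
      have h2 : 2 ≤ (P.erase p).card := by
        have := Finset.card_erase_of_mem hp
        omega
      obtain ⟨s₀, hs₀, s₁, hs₁, hne⟩ := Finset.one_lt_card.1 h2
      by_contra hTe
      rw [Finset.not_nonempty_iff_eq_empty] at hTe
      have hzero : ∀ s ∈ P.erase p, ⟪w, s⟫ = ⟪w, p⟫ := by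
        intro s hs
        by_contra hne'
        have : (-(⟪v, s⟫ - ⟪v, p⟫) / (⟪w, s⟫ - ⟪w, p⟫)) ∈ T :=
          Finset.mem_union_left _ (Finset.mem_image_of_mem _
            (Finset.mem_filter.2 ⟨Finset.mem_of_mem_erase hs, hne'⟩))
        rw [hTe] at this
        exact absurd this (Finset.notMem_empty _)
      have hcol := collinear_of_perp hw (hzero s₀ hs₀) (hzero s₁ hs₁)
        (Finset.ne_of_mem_erase hs₀)
      exact hgen.1 p hp s₀ (Finset.mem_of_mem_erase hs₀) s₁ (Finset.mem_of_mem_erase hs₁)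
        (Ne.symm (Finset.ne_of_mem_erase hs₀)) (Ne.symm (Finset.ne_of_mem_erase hs₁)) hne hcol
    · -- p ≠ r : find a third point
      have h1 : 1 ≤ ((P.erase p).erase r).card := by
        have e1 := Finset.card_erase_of_mem hp
        have hrP : r ∈ P.erase p := Finset.mem_erase.2 ⟨Ne.symm hpr, hr⟩
        have e2 := Finset.card_erase_of_mem hrP
        omega
      obtain ⟨s₀, hs₀⟩ := Finset.card_pos.1 h1
      have hs₀r : s₀ ≠ r := Finset.ne_of_mem_erase hs₀
      have hs₀p : s₀ ≠ p := Finset.ne_of_mem_erase (Finset.mem_of_mem_erase hs₀)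
      have hs₀P : s₀ ∈ P := Finset.mem_of_mem_erase (Finset.mem_of_mem_erase hs₀)
      by_contra hTe
      rw [Finset.not_nonempty_iff_eq_empty] at hTe
      have hz1 : ⟪w, s₀⟫ = ⟪w, p⟫ := by
        by_contra hne'
        have : (-(⟪v, s₀⟫ - ⟪v, p⟫) / (⟪w, s₀⟫ - ⟪w, p⟫)) ∈ T :=
          Finset.mem_union_left _ (Finset.mem_image_of_mem _
            (Finset.mem_filter.2 ⟨hs₀P, hne'⟩))
        rw [hTe] at this
        exact absurd this (Finset.notMem_empty _)
      have hz2 : ⟪w, s₀⟫ = ⟪w, r⟫ := by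
        by_contra hne'
        have : (-(⟪v, s₀⟫ - ⟪v, r⟫) / (⟪w, s₀⟫ - ⟪w, r⟫)) ∈ T :=
          Finset.mem_union_right _ (Finset.mem_image_of_mem _
            (Finset.mem_filter.2 ⟨hs₀P, hne'⟩))
        rw [hTe] at this
        exact absurd this (Finset.notMem_empty _)
      have hzr : ⟪w, r⟫ = ⟪w, p⟫ := by rw [← hz2, hz1]
      have hcol := collinear_of_perp hw hzr hz1 (Ne.symm hpr)
      exact hgen.1 p hp r hr s₀ hs₀P hpr (Ne.symm hs₀p) (Ne.symm hs₀r) hcol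
  -- pick the event closest to 0
  obtain ⟨t0, ht0T, ht0min⟩ := Finset.exists_min_image T (fun t => |t|) hTne
  set v' := v + t0 • w with hv'def
  have hcomp : ∀ s : Pt, ⟪v', s⟫ = ⟪v, s⟫ + t0 * ⟪w, s⟫ := fun s => by
    rw [hv'def, inner_add_left, real_inner_smul_left]
  have hwv : ⟪w, v⟫ = 0 := by rw [real_inner_comm]; exact hvw
  have hv' : v' ≠ 0 := by
    intro h
    have h2 : ⟪v', v⟫ = 0 := by rw [h, inner_zero_left]
    rw [hcomp, hwv, real_inner_self_eq_norm_sq] at h2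
    have := norm_pos_iff.2 hv
    nlinarith
  have hboundp : ∀ s ∈ P, ⟪w, s⟫ ≠ ⟪w, p⟫ →
      |t0| * |⟪w, s⟫ - ⟪w, p⟫| ≤ |⟪v, s⟫ - ⟪v, p⟫| := by
    intro s hs hne
    have hmem : (-(⟪v, s⟫ - ⟪v, p⟫) / (⟪w, s⟫ - ⟪w, p⟫)) ∈ T :=
      Finset.mem_union_left _ (Finset.mem_image_of_mem _ (Finset.mem_filter.2 ⟨hs, hne⟩))
    have h1 := ht0min _ hmem
    have hβ : |⟪w, s⟫ - ⟪w, p⟫| ≠ 0 := abs_ne_zero.2 (sub_ne_zero.2 hne)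
    calc |t0| * |⟪w, s⟫ - ⟪w, p⟫|
        ≤ |(-(⟪v, s⟫ - ⟪v, p⟫) / (⟪w, s⟫ - ⟪w, p⟫))| * |⟪w, s⟫ - ⟪w, p⟫| :=
          mul_le_mul_of_nonneg_right h1 (abs_nonneg _)
      _ = |⟪v, s⟫ - ⟪v, p⟫| := by rw [abs_div, abs_neg, div_mul_cancel₀ _ hβ]
  have hboundr : ∀ s ∈ P, ⟪w, s⟫ ≠ ⟪w, r⟫ →
      |t0| * |⟪w, s⟫ - ⟪w, r⟫| ≤ |⟪v, s⟫ - ⟪v, r⟫| := by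
    intro s hs hne
    have hmem : (-(⟪v, s⟫ - ⟪v, r⟫) / (⟪w, s⟫ - ⟪w, r⟫)) ∈ T :=
      Finset.mem_union_right _ (Finset.mem_image_of_mem _ (Finset.mem_filter.2 ⟨hs, hne⟩))
    have h1 := ht0min _ hmem
    have hβ : |⟪w, s⟫ - ⟪w, r⟫| ≠ 0 := abs_ne_zero.2 (sub_ne_zero.2 hne)
    calc |t0| * |⟪w, s⟫ - ⟪w, r⟫|
        ≤ |(-(⟪v, s⟫ - ⟪v, r⟫) / (⟪w, s⟫ - ⟪w, r⟫))| * |⟪w, s⟫ - ⟪w, r⟫| :=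
          mul_le_mul_of_nonneg_right h1 (abs_nonneg _)
      _ = |⟪v, s⟫ - ⟪v, r⟫| := by rw [abs_div, abs_neg, div_mul_cancel₀ _ hβ]
  -- sign transfers
  have transPpos : ∀ s ∈ P, ⟪v', p⟫ < ⟪v', s⟫ → ⟪v, p⟫ < ⟪v, s⟫ := by
    intro s hs hlt
    have hsp : s ≠ p := by rintro rfl; exact lt_irrefl _ hlt
    have hα : ⟪v, s⟫ - ⟪v, p⟫ ≠ 0 := sub_ne_zero.2 (hA1 s hs hsp)
    have hpos : 0 < (⟪v, s⟫ - ⟪v, p⟫) + t0 * (⟪w, s⟫ - ⟪w, p⟫) := by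
      have h2 := hlt
      rw [hcomp s, hcomp p] at h2
      have h3 := mul_sub t0 ⟪w, s⟫ ⟪w, p⟫
      linarith
    have := signPos hα (fun hβ => hboundp s hs (fun h => hβ (by rw [h, sub_self]))) hpos
    linarith
  have transPneg : ∀ s ∈ P, ⟪v', s⟫ < ⟪v', p⟫ → ⟪v, s⟫ < ⟪v, p⟫ := by
    intro s hs hlt
    have hsp : s ≠ p := by rintro rfl; exact lt_irrefl _ hlt
    have hα : ⟪v, s⟫ - ⟪v, p⟫ ≠ 0 := sub_ne_zero.2 (hA1 s hs hsp)
    have hneg : (⟪v, s⟫ - ⟪v, p⟫) + t0 * (⟪w, s⟫ - ⟪w, p⟫) < 0 := by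
      have h2 := hlt
      rw [hcomp s, hcomp p] at h2
      have h3 := mul_sub t0 ⟪w, s⟫ ⟪w, p⟫
      linarith
    have := signNeg hα (fun hβ => hboundp s hs (fun h => hβ (by rw [h, sub_self]))) hneg
    linarith
  have transRpos : ∀ s ∈ P, ⟪v', r⟫ < ⟪v', s⟫ → ⟪v, r⟫ < ⟪v, s⟫ := by
    intro s hs hlt
    have hsr : s ≠ r := by rintro rfl; exact lt_irrefl _ hlt
    have hα : ⟪v, s⟫ - ⟪v, r⟫ ≠ 0 := sub_ne_zero.2 (hA2 s hs hsr)
    have hpos : 0 < (⟪v, s⟫ - ⟪v, r⟫) + t0 * (⟪w, s⟫ - ⟪w, r⟫) := by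
      have h2 := hlt
      rw [hcomp s, hcomp r] at h2
      have h3 := mul_sub t0 ⟪w, s⟫ ⟪w, r⟫
      linarith
    have := signPos hα (fun hβ => hboundr s hs (fun h => hβ (by rw [h, sub_self]))) hpos
    linarith
  have transRneg : ∀ s ∈ P, ⟪v', s⟫ < ⟪v', r⟫ → ⟪v, s⟫ < ⟪v, r⟫ := by
    intro s hs hlt
    have hsr : s ≠ r := by rintro rfl; exact lt_irrefl _ hlt
    have hα : ⟪v, s⟫ - ⟪v, r⟫ ≠ 0 := sub_ne_zero.2 (hA2 s hs hsr)
    have hneg : (⟪v, s⟫ - ⟪v, r⟫) + t0 * (⟪w, s⟫ - ⟪w, r⟫) < 0 := by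
      have h2 := hlt
      rw [hcomp s, hcomp r] at h2
      have h3 := mul_sub t0 ⟪w, s⟫ ⟪w, r⟫
      linarith
    have := signNeg hα (fun hβ => hboundr s hs (fun h => hβ (by rw [h, sub_self]))) hneg
    linarith
  -- strips stay ordered
  have hle' : ⟪v', p⟫ ≤ ⟪v', r⟫ := by
    by_contra h
    push_neg at h
    exact absurd (transPneg r hr h) (not_lt.2 hle)
  -- error only decreases
  have hnerrle : nerr R B v' ⟪v', p⟫ ⟪v', r⟫ ≤ nerr R B v ⟪v, p⟫ ⟪v, r⟫ := by
    apply Finset.card_le_card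
    intro s hs
    rw [Finset.mem_union, Finset.mem_filter, Finset.mem_filter] at hs ⊢
    rcases hs with ⟨hsR, h1, h2⟩ | ⟨hsB, h⟩
    · have hsP : s ∈ P := Finset.mem_union_right _ hsR
      exact Or.inl ⟨hsR, transPpos s hsP h1, transRneg s hsP h2⟩
    · have hsP : s ∈ P := Finset.mem_union_left _ hsB
      rcases h with h | h
      · exact Or.inr ⟨hsB, Or.inl (transPneg s hsP h)⟩
      · exact Or.inr ⟨hsB, Or.inr (transRpos s hsP h)⟩
  -- the event gives a second point on one of the lines
  rcases Finset.mem_union.1 ht0T with hmem | hmem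
  · obtain ⟨s, hsf, hst⟩ := Finset.mem_image.1 hmem
    rw [Finset.mem_filter] at hsf
    have hβ : ⟪w, s⟫ - ⟪w, p⟫ ≠ 0 := sub_ne_zero.2 hsf.2
    have hss : ⟪v', s⟫ = ⟪v', p⟫ := by
      have key : (⟪v, s⟫ - ⟪v, p⟫) + t0 * (⟪w, s⟫ - ⟪w, p⟫) = 0 := by
        rw [← hst, div_mul_cancel₀ _ hβ]
        ring
      have h3 := mul_sub t0 ⟪w, s⟫ ⟪w, p⟫
      rw [hcomp s, hcomp p]
      linarith
    have hsp : s ≠ p := fun h => hsf.2 (by rw [h])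
    exact ⟨v', ⟪v', p⟫, ⟪v', r⟫, ⟨hv', hle', ⟨p, hp, s, hsf.1, Ne.symm hsp, rfl, hss⟩,
      ⟨r, hr, rfl⟩⟩, hnerrle⟩
  · obtain ⟨s, hsf, hst⟩ := Finset.mem_image.1 hmem
    rw [Finset.mem_filter] at hsf
    have hβ : ⟪w, s⟫ - ⟪w, r⟫ ≠ 0 := sub_ne_zero.2 hsf.2
    have hss : ⟪v', s⟫ = ⟪v', r⟫ := by
      have key : (⟪v, s⟫ - ⟪v, r⟫) + t0 * (⟪w, s⟫ - ⟪w, r⟫) = 0 := by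
        rw [← hst, div_mul_cancel₀ _ hβ]
        ring
      have h3 := mul_sub t0 ⟪w, s⟫ ⟪w, r⟫
      rw [hcomp s, hcomp r]
      linarith
    have hsr : s ≠ r := fun h => hsf.2 (by rw [h])
    refine ⟨-v', -⟪v', r⟫, -⟪v', p⟫, ⟨neg_ne_zero.2 hv', neg_le_neg hle',
      ⟨r, hr, s, hsf.1, Ne.symm hsr, by rw [inner_neg_left], by rw [inner_neg_left, hss]⟩,
      ⟨p, hp, by rw [inner_neg_left]⟩⟩, ?_⟩
    rw [nerr_flip]
    exact hnerrle

/-- There is an optimal strip one of whose boundary lines passes through two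
points of `B ∪ R` and the other through at least one point of `B ∪ R`. -/
theorem exists_opt_strip_through_points (R B : Finset Pt) (hB : B.Nonempty)
    (hcard : 3 ≤ (B ∪ R).card) (hgen : GenPos (B ∪ R)) :
    ∃ (v : Pt) (c₁ c₂ : ℝ), v ≠ 0 ∧ c₁ ≤ c₂ ∧
      (∃ p ∈ B ∪ R, ∃ q ∈ B ∪ R, p ≠ q ∧
        (inner ℝ v p : ℝ) = c₁ ∧ (inner ℝ v q : ℝ) = c₁) ∧
      (∃ r ∈ B ∪ R, (inner ℝ v r : ℝ) = c₂) ∧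
      ∀ (v' : Pt) (c₁' c₂' : ℝ), v' ≠ 0 → c₁' ≤ c₂' →
        (errSet R B (strip v c₁ c₂)).card ≤ (errSet R B (strip v' c₁' c₂')).card := by
  -- there exists at least one `Good` configuration
  have h2 : ∃ p ∈ B ∪ R, ∃ q ∈ B ∪ R, p ≠ q := by
    obtain ⟨p, hp, q, hq, hpq⟩ := Finset.one_lt_card.1 (show 1 < (B ∪ R).card by omega)
    exact ⟨p, hp, q, hq, hpq⟩
  obtain ⟨p₀, hp₀, q₀, hq₀, hpq₀⟩ := h2
  have hu : q₀ - p₀ ≠ 0 := sub_ne_zero.2 (Ne.symm hpq₀)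
  set v₀ := rot (q₀ - p₀) with hv₀def
  have hv₀ : v₀ ≠ 0 := rot_ne_zero hu
  have hq₀p₀ : ⟪v₀, q₀⟫ = ⟪v₀, p₀⟫ := by
    have h0 : ⟪v₀, q₀ - p₀⟫ = 0 := by
      rw [real_inner_comm]
      exact inner_rot_self (q₀ - p₀)
    rw [inner_sub_right] at h0
    linarith
  have hgood₀ : Good (B ∪ R) v₀ ⟪v₀, p₀⟫ ⟪v₀, p₀⟫ :=
    ⟨hv₀, le_refl _, ⟨p₀, hp₀, q₀, hq₀, hpq₀, rfl, hq₀p₀⟩, ⟨p₀, hp₀, rfl⟩⟩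
  -- minimize the error over Good configurations
  obtain ⟨n, hnS, hnmin⟩ := Nat.lt_wfRel.wf.has_min
    {n | ∃ v c₁ c₂, Good (B ∪ R) v c₁ c₂ ∧ nerr R B v c₁ c₂ = n}
    ⟨nerr R B v₀ ⟪v₀, p₀⟫ ⟪v₀, p₀⟫, v₀, ⟪v₀, p₀⟫, ⟪v₀, p₀⟫, hgood₀, rfl⟩
  obtain ⟨v, c₁, c₂, ⟨hv, hle, h2pts, h1pt⟩, hn⟩ := hnS
  refine ⟨v, c₁, c₂, hv, hle, h2pts, h1pt, ?_⟩
  intro v' c₁' c₂' hv' hle'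
  rw [errSet_card R B hv, errSet_card R B hv', hn]
  obtain ⟨p, hp, r, hr, hpr, hsnap⟩ := snap R B hB v' hle'
  obtain ⟨v'', c₁'', c₂'', hgood'', hler⟩ := rotmain R B hgen hcard hv' hp hr hpr
  have hmem : nerr R B v'' c₁'' c₂'' ∈
      {n | ∃ v c₁ c₂, Good (B ∪ R) v c₁ c₂ ∧ nerr R B v c₁ c₂ = n} :=
    ⟨v'', c₁'', c₂'', hgood'', rfl⟩
  have hnle : n ≤ nerr R B v'' c₁'' c₂'' := not_lt.1 (hnmin _ hmem)
  exact hnle.trans (hler.trans hsnap)
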